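/- There exist constants c₁, c₂ > 0, depending only on α and d, such that for every x ∈ ℤ^d and every real r > 0 one has the inclusions B(x, ρ_x^{−1}(c₁ r)) ⊆ B_ρ(x, r) ⊆ B(x, ρ_x^{−1}(c₂ r)). -/

import Mathlib

open scoped BigOperators

/-- ℓ∞ norm on ℤ^d, as a natural number. -/
def linf {d : ℕ} (x : Fin d → ℤ) : ℕ :=
  Finset.univ.sup fun i => (x i).natAbs

/-- ℓ¹ norm on ℤ^d, as a natural number. -/
def l1 {d : ℕ} (x : Fin d → ℤ) : ℕ :=
  ∑ i, (x i).natAbs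

/-- `ν x = (max(|x|,1))^α`. -/
noncomputable def nu (α : ℝ) {d : ℕ} (x : Fin d → ℤ) : ℝ :=
  ((max (linf x) 1 : ℕ) : ℝ) ^ α

/-- The conductance `μ x y = (max(|x|,|y|))^(-α)` if `|x-y|₁ = 1`, and `0` otherwise. -/
noncomputable def mu (α : ℝ) {d : ℕ} (x y : Fin d → ℤ) : ℝ :=
  if l1 (x - y) = 1 then ((max (linf x) (linf y) : ℕ) : ℝ) ^ (-α) else 0

/-- `z 0, …, z m` is a path: consecutive points are at ℓ¹-distance one. -/
def IsPath {d : ℕ} (z : ℕ → Fin d → ℤ) (m : ℕ) : Prop :=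
  ∀ i < m, l1 (z (i + 1) - z i) = 1

/-- The metric `ρ(x,y)`: `0` if `x = y`, otherwise the infimum of `∑ ν (z i)` over
paths from `x` to `y`. -/
noncomputable def rho (α : ℝ) {d : ℕ} (x y : Fin d → ℤ) : ℝ :=
  if x = y then 0
  else sInf {S : ℝ | ∃ (m : ℕ) (z : ℕ → Fin d → ℤ), IsPath z m ∧ z 0 = x ∧ z m = y ∧
    S = ∑ i ∈ Finset.range (m + 1), nu α (z i)}

/-- `ρ_x(r) = (max(|x|,r))^α · r`. -/
noncomputable def rhox (α : ℝ) {d : ℕ} (x : Fin d → ℤ) (r : ℝ) : ℝ :=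
  (max ((linf x : ℕ) : ℝ) r) ^ α * r

/-- `ρ_x⁻¹(r) = (max(|x|, r^{1/(1+α)}))^{-α} · r`, the inverse function of `ρ_x`. -/
noncomputable def rhoxInv (α : ℝ) {d : ℕ} (x : Fin d → ℤ) (r : ℝ) : ℝ :=
  (max ((linf x : ℕ) : ℝ) (r ^ (1 / (1 + α)))) ^ (-α) * r

/-- `V(x,r) = ν(B(x,r))`, the ν-volume of the ℓ∞-ball of radius `r` about `x`. -/
noncomputable def V (α : ℝ) {d : ℕ} (x : Fin d → ℤ) (r : ℝ) : ℝ :=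
  ∑' y : {y : Fin d → ℤ // ((linf (y - x) : ℕ) : ℝ) ≤ r}, nu α y.1

/-- `V_ρ(x,r) = ν(B_ρ(x,r))`, the ν-volume of the ρ-ball of radius `r` about `x`. -/
noncomputable def Vrho (α : ℝ) {d : ℕ} (x : Fin d → ℤ) (r : ℝ) : ℝ :=
  ∑' y : {y : Fin d → ℤ // rho α x y ≤ r}, nu α y.1
section Helpers

variable {d : ℕ}

lemma natAbs_le_linf (v : Fin d → ℤ) (i : Fin d) : (v i).natAbs ≤ linf v :=
  Finset.le_sup (f := fun i => (v i).natAbs) (Finset.mem_univ i)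

lemma linf_le_l1 (v : Fin d → ℤ) : linf v ≤ l1 v :=
  Finset.sup_le fun i _ => Finset.single_le_sum (f := fun i => (v i).natAbs)
    (fun j _ => Nat.zero_le _) (Finset.mem_univ i)

lemma linf_add_le (u v : Fin d → ℤ) : linf (u + v) ≤ linf u + linf v :=
  Finset.sup_le fun i _ => le_trans (Int.natAbs_add_le _ _)
    (Nat.add_le_add (natAbs_le_linf u i) (natAbs_le_linf v i))

lemma l1_add_le (u v : Fin d → ℤ) : l1 (u + v) ≤ l1 u + l1 v := by
  rw [l1, l1, l1, ← Finset.sum_add_distrib]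
  exact Finset.sum_le_sum fun i _ => Int.natAbs_add_le _ _

lemma l1_neg (v : Fin d → ℤ) : l1 (-v) = l1 v := by
  simp [l1]

lemma linf_neg (v : Fin d → ℤ) : linf (-v) = linf v := by
  simp [linf]

lemma linf_sub_comm (u v : Fin d → ℤ) : linf (u - v) = linf (v - u) := by
  rw [← linf_neg, neg_sub]

lemma linf_le_add (u w : Fin d → ℤ) : linf u ≤ linf w + l1 (u - w) := by
  have h1 : u = w + (u - w) := by ring_nf
  calc linf u = linf (w + (u - w)) := by rw [← h1]
    _ ≤ linf w + linf (u - w) := linf_add_le _ _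
    _ ≤ linf w + l1 (u - w) := Nat.add_le_add_left (linf_le_l1 _) _

lemma linf_pos_of_ne {u v : Fin d → ℤ} (h : u ≠ v) : 1 ≤ linf (u - v) := by
  rcases Nat.eq_zero_or_pos (linf (u - v)) with h0 | h1
  · exfalso; apply h; funext i
    have h2 := natAbs_le_linf (u - v) i
    rw [h0, Nat.le_zero] at h2
    have h3 : (u - v) i = 0 := Int.natAbs_eq_zero.mp h2
    have : u i - v i = 0 := h3
    linarith
  · exact h1

lemma one_le_nubase (α : ℝ) (x : Fin d → ℤ) : (1:ℝ) ≤ ((max (linf x) 1 : ℕ) : ℝ) := by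
  exact_mod_cast le_max_right _ _

lemma nu_pos (α : ℝ) (x : Fin d → ℤ) : 0 < nu α x :=
  Real.rpow_pos_of_pos (lt_of_lt_of_le one_pos (one_le_nubase α x)) _

lemma nu_nonneg (α : ℝ) (x : Fin d → ℤ) : 0 ≤ nu α x := (nu_pos α x).le

lemma path_l1 {z : ℕ → Fin d → ℤ} {m : ℕ} (hz : IsPath z m) :
    ∀ i, i ≤ m → l1 (z i - z 0) ≤ i := by
  intro i
  induction i with
  | zero => intro _; simp [l1]
  | succ i ih =>
    intro him
    have h1 : z (i + 1) - z 0 = (z (i + 1) - z i) + (z i - z 0) := by ring_nf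
    calc l1 (z (i + 1) - z 0) ≤ l1 (z (i + 1) - z i) + l1 (z i - z 0) := by
          rw [h1]; exact l1_add_le _ _
      _ ≤ 1 + i := Nat.add_le_add (le_of_eq (hz i (by omega))) (ih (by omega))
      _ = i + 1 := by omega

lemma path_linf_upper {z : ℕ → Fin d → ℤ} {m : ℕ} (hz : IsPath z m) (i : ℕ) (him : i ≤ m) :
    linf (z i) ≤ linf (z 0) + i :=
  le_trans (linf_le_add (z i) (z 0)) (Nat.add_le_add_left (path_l1 hz i him) _)

lemma path_linf_lower {z : ℕ → Fin d → ℤ} {m : ℕ} (hz : IsPath z m) (i : ℕ) (him : i ≤ m) :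
    linf (z 0) ≤ linf (z i) + i := by
  have := linf_le_add (z 0) (z i)
  have h2 : l1 (z 0 - z i) ≤ i := by rw [← l1_neg, neg_sub]; exact path_l1 hz i him
  omega

lemma path_m_ge {z : ℕ → Fin d → ℤ} {m : ℕ} (hz : IsPath z m) :
    linf (z m - z 0) ≤ m :=
  le_trans (linf_le_l1 _) (path_l1 hz m le_rfl)

lemma path_reverse {z : ℕ → Fin d → ℤ} {m : ℕ} (hz : IsPath z m) :
    IsPath (fun i => z (m - i)) m := by
  intro i him
  have h1 : m - i = (m - (i + 1)) + 1 := by omega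
  have h2 : m - (i + 1) < m := by omega
  have := hz (m - (i + 1)) h2
  calc l1 (z (m - (i + 1)) - z (m - i)) = l1 (-(z (m - i) - z (m - (i + 1)))) := by ring_nf
    _ = l1 (z (m - i) - z (m - (i + 1))) := l1_neg _
    _ = 1 := by rw [h1]; exact this

end Helpers
section PathConstruction

variable {d : ℕ}

/-- sign helper -/
def sg (c : ℤ) : ℤ := if c < 0 then -1 else 1

lemma sg_mul_natAbs (c : ℤ) : sg c * (c.natAbs : ℤ) = c := by
  unfold sg; split <;> omega

lemma sg_eq (c : ℤ) : sg c = 1 ∨ sg c = -1 := by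
  unfold sg; split <;> simp

/-- partial interpolation point -/
def W (x y : Fin d → ℤ) (k : ℕ) : Fin d → ℤ := fun l => if (l : ℕ) < k then y l else x l

/-- points on segment `j` of the coordinate path -/
def Q (x y : Fin d → ℤ) (j : Fin d) (i : ℕ) : Fin d → ℤ :=
  Function.update (W x y (j : ℕ)) j (x j + sg (y j - x j) * i)

lemma l1_update_sub (u : Fin d → ℤ) (j : Fin d) (b c : ℤ) :
    l1 (Function.update u j b - Function.update u j c) = (b - c).natAbs := by
  unfold l1
  rw [Finset.sum_eq_single j]
  · simp
  · intro l _ hlj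
    simp [Function.update_apply, hlj]
  · intro h; exact absurd (Finset.mem_univ j) h

lemma seg_path (u : Fin d → ℤ) (j : Fin d) (ε : ℤ) (hε : ε = 1 ∨ ε = -1) (t : ℕ) :
    ∃ z : ℕ → Fin d → ℤ, IsPath z t ∧ z 0 = u ∧
      z t = Function.update u j (u j + ε * t) ∧
      ∀ i, i ≤ t → z i = Function.update u j (u j + ε * (i : ℕ)) := by
  refine ⟨fun i => Function.update u j (u j + ε * (min i t : ℕ)), ?_, ?_, ?_, ?_⟩
  · intro i hit
    show l1 (Function.update u j (u j + ε * (min (i + 1) t : ℕ)) -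
      Function.update u j (u j + ε * (min i t : ℕ))) = 1
    have h1 : min (i + 1) t = i + 1 := by omega
    have h2 : min i t = i := by omega
    rw [h1, h2, l1_update_sub]
    have h3 : u j + ε * (↑(i + 1) : ℤ) - (u j + ε * (i : ℕ)) = ε := by push_cast; ring
    rw [h3]
    rcases hε with h | h <;> simp [h]
  · show Function.update u j (u j + ε * (min 0 t : ℕ)) = u
    simp
  · show Function.update u j (u j + ε * (min t t : ℕ)) = _
    simp
  · intro i hit
    show Function.update u j (u j + ε * (min i t : ℕ)) = _
    have h2 : min i t = i := by omega
    rw [h2]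

lemma path_concat (α : ℝ) {z₁ z₂ : ℕ → Fin d → ℤ} {m₁ m₂ : ℕ} (h₁ : IsPath z₁ m₁)
    (h₂ : IsPath z₂ m₂) (hw : z₁ m₁ = z₂ 0) :
    ∃ z : ℕ → Fin d → ℤ, IsPath z (m₁ + m₂) ∧ z 0 = z₁ 0 ∧ z (m₁ + m₂) = z₂ m₂ ∧
      ∑ i ∈ Finset.range (m₁ + m₂ + 1), nu α (z i) ≤
        (∑ i ∈ Finset.range (m₁ + 1), nu α (z₁ i)) +
        ∑ i ∈ Finset.range (m₂ + 1), nu α (z₂ i) := by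
  set z : ℕ → Fin d → ℤ := fun i => if i ≤ m₁ then z₁ i else z₂ (i - m₁) with hz
  have hlow : ∀ i, i ≤ m₁ → z i = z₁ i := by
    intro i hi
    simp only [hz, if_pos hi]
  have hmid : ∀ i, m₁ ≤ i → z i = z₂ (i - m₁) := by
    intro i hi
    rcases eq_or_lt_of_le hi with h | h
    · have h0 : i - m₁ = 0 := by omega
      rw [hlow i (le_of_eq h.symm), h0, ← hw, h]
    · have hn : ¬ i ≤ m₁ := by omega
      simp only [hz, if_neg hn]
  refine ⟨z, ?_, hlow 0 (Nat.zero_le _), ?_, ?_⟩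
  · intro i hi
    by_cases hle : i + 1 ≤ m₁
    · rw [hlow (i+1) hle, hlow i (by omega)]
      exact h₁ i (by omega)
    · rw [hmid (i+1) (by omega), hmid i (by omega)]
      have h3 : i + 1 - m₁ = (i - m₁) + 1 := by omega
      rw [h3]
      exact h₂ (i - m₁) (by omega)
  · have he : m₁ + m₂ - m₁ = m₂ := by omega
    rw [hmid (m₁ + m₂) (Nat.le_add_right _ _), he]
  · have hsplit : ∑ i ∈ Finset.range (m₁ + m₂ + 1), nu α (z i) =
        (∑ i ∈ Finset.range (m₁ + 1), nu α (z i)) +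
        ∑ i ∈ Finset.Ico (m₁ + 1) (m₁ + m₂ + 1), nu α (z i) := by
      rw [Finset.sum_range_add_sum_Ico _ (by omega : m₁ + 1 ≤ m₁ + m₂ + 1)]
    rw [hsplit]
    apply add_le_add
    · apply le_of_eq
      apply Finset.sum_congr rfl
      intro i hi
      rw [Finset.mem_range] at hi
      rw [hlow i (by omega)]
    · have h4 : ∑ i ∈ Finset.Ico (m₁ + 1) (m₁ + m₂ + 1), nu α (z i) =
          ∑ i ∈ Finset.range m₂, nu α (z₂ (i + 1)) := by
        rw [Finset.sum_Ico_eq_sum_range]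
        have h5 : m₁ + m₂ + 1 - (m₁ + 1) = m₂ := by omega
        rw [h5]
        apply Finset.sum_congr rfl
        intro i _
        have he : m₁ + 1 + i - m₁ = i + 1 := by omega
        have hle2 : m₁ ≤ m₁ + 1 + i := by omega
        rw [hmid (m₁ + 1 + i) hle2, he]
      rw [h4, Finset.sum_range_succ' (fun i => nu α (z₂ i)) m₂]
      exact le_add_of_nonneg_right (nu_nonneg _ _)

lemma box_Q (x y : Fin d → ℤ) (j : Fin d) (i : ℕ) (hi : i ≤ (y j - x j).natAbs) :
    linf (Q x y j i - x) ≤ linf (y - x) := by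
  apply Finset.sup_le
  intro l _
  show ((Q x y j i - x) l).natAbs ≤ linf (y - x)
  by_cases hlj : l = j
  · subst hlj
    have h1 : (Q x y l i - x) l = sg (y l - x l) * i := by
      simp [Q, Function.update_apply]
    rw [h1]
    have h2 : (sg (y l - x l) * (i:ℤ)).natAbs = i := by
      rcases sg_eq (y l - x l) with h | h <;> simp [h]
    rw [h2]
    exact le_trans hi (natAbs_le_linf (y - x) l)
  · have h1 : (Q x y j i - x) l = (if (l:ℕ) < (j:ℕ) then y l - x l else 0) := by
      simp only [Pi.sub_apply, Q, Function.update_apply, if_neg hlj, W]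
      split <;> simp
    rw [h1]
    split
    · exact natAbs_le_linf (y - x) l
    · simp

lemma multi_path_aux (α : ℝ) (x y : Fin d → ℤ) (k : ℕ) (hk : k ≤ d) :
    ∃ (m : ℕ) (z : ℕ → Fin d → ℤ), IsPath z m ∧ z 0 = x ∧ z m = W x y k ∧
      ∑ i ∈ Finset.range (m + 1), nu α (z i) ≤
        nu α x + ∑ j ∈ Finset.univ.filter (fun j : Fin d => (j : ℕ) < k),
          ∑ i ∈ Finset.range ((y j - x j).natAbs + 1), nu α (Q x y j i) := by
  induction k with
  | zero =>
    refine ⟨0, fun _ => x, fun i hi => absurd hi (Nat.not_lt_zero i), rfl, ?_, ?_⟩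
    · funext l; simp [W]
    · have h0 : ∑ i ∈ Finset.range (0 + 1), nu α ((fun _ => x) i) = nu α x := by simp
      rw [h0]
      apply le_add_of_nonneg_right
      apply Finset.sum_nonneg
      intro j _
      exact Finset.sum_nonneg fun i _ => nu_nonneg _ _
  | succ k ih =>
    obtain ⟨m₁, z₁, hP₁, h0₁, hm₁, hs₁⟩ := ih (by omega)
    set j : Fin d := ⟨k, by omega⟩ with hj
    have hjval : (j : ℕ) = k := rfl
    set t : ℕ := (y j - x j).natAbs with ht
    set ε : ℤ := sg (y j - x j) with hε
    obtain ⟨z₂, hP₂, h0₂, hm₂, hpt₂⟩ := seg_path (W x y k) j ε (sg_eq _) t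
    have hWj : W x y k j = x j := by
      simp [W, hjval]
    have hz₂end : z₂ t = W x y (k + 1) := by
      rw [hm₂, hWj]
      funext l
      by_cases hlj : l = j
      · rw [hlj, Function.update_self]
        have hxy : x j + ε * (t:ℤ) = y j := by
          have := sg_mul_natAbs (y j - x j)
          rw [hε, ht]; linarith
        rw [hxy]
        have hlt : ((j:ℕ)) < k + 1 := by rw [hjval]; omega
        simp [W, hlt]
      · rw [Function.update_of_ne hlj]
        have hne : (l:ℕ) ≠ k := fun h => hlj (Fin.ext (h.trans hjval.symm))
        have hlk : ((l:ℕ) < k + 1) ↔ ((l:ℕ) < k) := by omega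
        simp only [W, hlk]
    have hlink : z₁ m₁ = z₂ 0 := by rw [hm₁, h0₂]
    obtain ⟨z, hP, h0, hm, hs⟩ := path_concat α hP₁ hP₂ hlink
    refine ⟨m₁ + t, z, hP, by rw [h0, h0₁], by rw [hm, hz₂end], ?_⟩
    have hseg : ∑ i ∈ Finset.range (t + 1), nu α (z₂ i) =
        ∑ i ∈ Finset.range (t + 1), nu α (Q x y j i) := by
      apply Finset.sum_congr rfl
      intro i hi
      rw [Finset.mem_range] at hi
      rw [hpt₂ i (by omega), hWj]
      rfl
    have hfilter : Finset.univ.filter (fun l : Fin d => (l : ℕ) < k + 1) =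
        insert j (Finset.univ.filter (fun l : Fin d => (l : ℕ) < k)) := by
      ext l
      simp only [Finset.mem_filter, Finset.mem_insert, Finset.mem_univ, true_and]
      constructor
      · intro h
        rcases Nat.lt_succ_iff_lt_or_eq.mp h with h' | h'
        · exact Or.inr h'
        · exact Or.inl (Fin.ext (h'.trans hjval.symm))
      · rintro (rfl | h)
        · rw [hjval]; omega
        · omega
    have hnotmem : j ∉ Finset.univ.filter (fun l : Fin d => (l : ℕ) < k) := by
      simp [Finset.mem_filter, hjval]
    rw [hfilter, Finset.sum_insert hnotmem]
    calc ∑ i ∈ Finset.range (m₁ + t + 1), nu α (z i) ≤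
        (∑ i ∈ Finset.range (m₁ + 1), nu α (z₁ i)) + ∑ i ∈ Finset.range (t + 1), nu α (z₂ i) := hs
      _ ≤ (nu α x + ∑ l ∈ Finset.univ.filter (fun l : Fin d => (l : ℕ) < k),
            ∑ i ∈ Finset.range ((y l - x l).natAbs + 1), nu α (Q x y l i)) +
          ∑ i ∈ Finset.range (t + 1), nu α (Q x y j i) := by
            rw [← hseg]; exact add_le_add hs₁ le_rfl
      _ = _ := by rw [ht]; ring

lemma multi_path (α : ℝ) (x y : Fin d → ℤ) :
    ∃ (m : ℕ) (z : ℕ → Fin d → ℤ), IsPath z m ∧ z 0 = x ∧ z m = y ∧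
      ∑ i ∈ Finset.range (m + 1), nu α (z i) ≤
        nu α x + ∑ j : Fin d,
          ∑ i ∈ Finset.range ((y j - x j).natAbs + 1), nu α (Q x y j i) := by
  obtain ⟨m, z, hP, h0, hm, hs⟩ := multi_path_aux α x y d le_rfl
  have h1 : W x y d = y := by
    funext l
    simp only [W]
    rw [if_pos l.isLt]
  have h2 : Finset.univ.filter (fun l : Fin d => (l : ℕ) < d) = Finset.univ := by
    apply Finset.filter_true_of_mem
    intro l _
    exact l.isLt
  exact ⟨m, z, hP, h0, by rw [hm, h1], by rwa [h2] at hs⟩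

end PathConstruction
section RhoxLemmas

variable {d : ℕ}

lemma rhox_strictMono {α : ℝ} (hα : -1 < α) (x : Fin d → ℤ) {s t : ℝ}
    (hs : 0 < s) (hst : s < t) : rhox α x s < rhox α x t := by
  set a : ℝ := ((linf x : ℕ) : ℝ) with ha
  have ha0 : 0 ≤ a := Nat.cast_nonneg _
  have h1α : 0 < α + 1 := by linarith
  unfold rhox
  rcases le_or_gt a s with h | h
  · rw [max_eq_right h, max_eq_right (h.trans hst.le)]
    rw [← Real.rpow_add_one hs.ne', ← Real.rpow_add_one (by linarith : t ≠ 0)]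
    exact Real.rpow_lt_rpow hs.le hst h1α
  · rw [max_eq_left h.le]
    have ha' : 0 < a := hs.trans h
    rcases le_or_gt t a with h2 | h2
    · rw [max_eq_left h2]
      exact mul_lt_mul_of_pos_left hst (Real.rpow_pos_of_pos ha' _)
    · rw [max_eq_right h2.le]
      calc a ^ α * s < a ^ α * a := mul_lt_mul_of_pos_left h (Real.rpow_pos_of_pos ha' _)
        _ = a ^ (α + 1) := (Real.rpow_add_one ha'.ne' α).symm
        _ ≤ t ^ (α + 1) := Real.rpow_le_rpow ha0 h2.le h1α.le
        _ = t ^ α * t := Real.rpow_add_one (by linarith : t ≠ 0) α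

lemma rhox_mono {α : ℝ} (hα : -1 < α) (x : Fin d → ℤ) {s t : ℝ}
    (hs : 0 < s) (hst : s ≤ t) : rhox α x s ≤ rhox α x t := by
  rcases eq_or_lt_of_le hst with h | h
  · rw [h]
  · exact (rhox_strictMono hα x hs h).le

lemma le_of_rhox_le {α : ℝ} (hα : -1 < α) (x : Fin d → ℤ) {s t : ℝ}
    (ht : 0 < t) (h : rhox α x s ≤ rhox α x t) : s ≤ t := by
  by_contra hc
  push_neg at hc
  exact absurd h (not_le.mpr (rhox_strictMono hα x ht hc))

lemma rhoxInv_pos {α : ℝ} (hα : -1 < α) (x : Fin d → ℤ) {s : ℝ} (hs : 0 < s) :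
    0 < rhoxInv α x s := by
  unfold rhoxInv
  apply mul_pos _ hs
  apply Real.rpow_pos_of_pos
  exact lt_of_lt_of_le (Real.rpow_pos_of_pos hs _) (le_max_right _ _)

lemma rhox_rhoxInv {α : ℝ} (hα : -1 < α) (x : Fin d → ℤ) {s : ℝ} (hs : 0 < s) :
    rhox α x (rhoxInv α x s) = s := by
  set a : ℝ := ((linf x : ℕ) : ℝ) with ha
  have ha0 : 0 ≤ a := Nat.cast_nonneg _
  have h1α : (0:ℝ) < 1 + α := by linarith
  have h1α' : (1:ℝ) + α ≠ 0 := h1α.ne'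
  set p : ℝ := 1 / (1 + α) with hp
  have hp0 : 0 < p := by rw [hp]; positivity
  have hb : 0 < s ^ p := Real.rpow_pos_of_pos hs _
  rcases le_or_gt a (s ^ p) with hab | hab
  · have hcalc : (s ^ p) ^ (-α) * s = s ^ p := by
      rw [← Real.rpow_mul hs.le, ← Real.rpow_add_one hs.ne']
      congr 1
      rw [hp]
      field_simp
      ring
    have hR : rhoxInv α x s = s ^ p := by
      unfold rhoxInv
      rw [← hp, max_eq_right hab, hcalc]
    rw [hR]
    unfold rhox
    rw [max_eq_right hab, ← Real.rpow_mul hs.le, ← Real.rpow_add hs]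
    have hone : p * α + p = 1 := by rw [hp]; field_simp; ring
    rw [hone, Real.rpow_one]
  · have ha' : 0 < a := hb.trans hab
    have hsa : s ≤ a ^ (1 + α) := by
      have h1 : s = (s ^ p) ^ (1 + α) := by
        rw [← Real.rpow_mul hs.le]
        have hpe : p * (1 + α) = 1 := by rw [hp]; field_simp
        rw [hpe, Real.rpow_one]
      rw [h1]
      exact Real.rpow_le_rpow hb.le hab.le h1α.le
    have hR : rhoxInv α x s = a ^ (-α) * s := by
      unfold rhoxInv
      rw [← hp, max_eq_left hab.le]
    have hRa : a ^ (-α) * s ≤ a := by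
      calc a ^ (-α) * s ≤ a ^ (-α) * a ^ (1 + α) :=
            mul_le_mul_of_nonneg_left hsa (Real.rpow_nonneg ha0 _)
        _ = a ^ (-α + (1 + α)) := (Real.rpow_add ha' _ _).symm
        _ = a := by rw [show -α + (1 + α) = 1 by ring, Real.rpow_one]
    rw [hR]
    unfold rhox
    rw [max_eq_left hRa, ← mul_assoc, ← Real.rpow_add ha']
    rw [show α + -α = 0 by ring, Real.rpow_zero, one_mul]

end RhoxLemmas
section SumEstimates

/-- `g k = max(k,1)^α` -/
noncomputable def gfun (α : ℝ) (k : ℕ) : ℝ := ((max k 1 : ℕ) : ℝ) ^ α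

lemma nu_eq_gfun (α : ℝ) {d : ℕ} (v : Fin d → ℤ) : nu α v = gfun α (linf v) := rfl

lemma gfun_nonneg (α : ℝ) (k : ℕ) : 0 ≤ gfun α k :=
  Real.rpow_nonneg (Nat.cast_nonneg _) _

lemma gfun_antitone {α : ℝ} (hα : α ≤ 0) {k k' : ℕ} (h : k ≤ k') :
    gfun α k' ≤ gfun α k := by
  apply Real.rpow_le_rpow_of_nonpos _ _ hα
  · exact_mod_cast Nat.lt_of_lt_of_le Nat.zero_lt_one (le_max_right k 1)
  · exact_mod_cast max_le_max_right 1 h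

lemma gfun_le_one {α : ℝ} (hα : α ≤ 0) (k : ℕ) : gfun α k ≤ 1 :=
  Real.rpow_le_one_of_one_le_of_nonpos (by exact_mod_cast le_max_right k 1) hα

lemma sum_inj_le {A : Finset ℕ} {φ : ℕ → ℕ} {N : ℕ} {F f : ℕ → ℝ}
    (hinj : ∀ i ∈ A, ∀ j ∈ A, φ i = φ j → i = j)
    (himg : ∀ i ∈ A, φ i ∈ Finset.range (N + 1))
    (hf : ∀ k, 0 ≤ f k) (hle : ∀ i ∈ A, F i ≤ f (φ i)) :
    ∑ i ∈ A, F i ≤ ∑ k ∈ Finset.range (N + 1), f k := by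
  calc ∑ i ∈ A, F i ≤ ∑ i ∈ A, f (φ i) := Finset.sum_le_sum hle
    _ = ∑ k ∈ A.image φ, f k := (Finset.sum_image hinj).symm
    _ ≤ ∑ k ∈ Finset.range (N + 1), f k := by
        apply Finset.sum_le_sum_of_subset_of_nonneg
        · intro k hk
          obtain ⟨i, hi, rfl⟩ := Finset.mem_image.mp hk
          exact himg i hi
        · intro k _ _; exact hf k

lemma intervalSum {α : ℝ} (hα : α ≤ 0) (c e : ℤ) (he : e = 1 ∨ e = -1) (t N : ℕ)
    (ht : t ≤ N) :
    ∑ i ∈ Finset.range (t + 1), gfun α ((c + e * i).natAbs) ≤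
      2 * ∑ k ∈ Finset.range (N + 1), gfun α k := by
  have hsum0 : 0 ≤ ∑ k ∈ Finset.range (N + 1), gfun α k :=
    Finset.sum_nonneg fun k _ => gfun_nonneg α k
  have habs : ∀ i : ℕ, (c + e * i).natAbs = ((i : ℤ) - (-e * c)).natAbs := by
    intro i
    rcases he with h | h <;> (rw [h]; omega)
  set c' : ℤ := -e * c with hc'
  rcases lt_or_ge c' 0 with hc | hc
  · have hle : ∀ i ∈ Finset.range (t + 1), gfun α ((c + e * i).natAbs) ≤ gfun α i := by
      intro i _
      rw [habs i]
      apply gfun_antitone hα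
      omega
    calc ∑ i ∈ Finset.range (t + 1), gfun α ((c + e * i).natAbs)
        ≤ ∑ i ∈ Finset.range (t + 1), gfun α i := Finset.sum_le_sum hle
      _ ≤ ∑ k ∈ Finset.range (N + 1), gfun α k := by
          apply Finset.sum_le_sum_of_subset_of_nonneg
          · exact Finset.range_subset_range.mpr (by omega)
          · intro k _ _; exact gfun_nonneg α k
      _ ≤ 2 * ∑ k ∈ Finset.range (N + 1), gfun α k := by linarith
  · set c₀ : ℕ := c'.toNat with hc₀
    have hc₀' : (c₀ : ℤ) = c' := Int.toNat_of_nonneg hc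
    rw [← Finset.sum_filter_add_sum_filter_not (Finset.range (t + 1)) (fun i => i ≤ c₀)]
    have hA : ∑ i ∈ (Finset.range (t + 1)).filter (fun i => i ≤ c₀),
        gfun α ((c + e * i).natAbs) ≤ ∑ k ∈ Finset.range (N + 1), gfun α k := by
      apply sum_inj_le (φ := fun i => min c₀ t - i)
      · intro i hi j hj hij
        simp only [Finset.mem_filter, Finset.mem_range] at hi hj
        omega
      · intro i hi
        simp only [Finset.mem_filter, Finset.mem_range] at hi
        rw [Finset.mem_range]
        omega
      · exact gfun_nonneg α
      · intro i hi
        simp only [Finset.mem_filter, Finset.mem_range] at hi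
        rw [habs i]
        have h1 : ((i : ℤ) - c').natAbs = c₀ - i := by omega
        rw [h1]
        exact gfun_antitone hα (by omega)
    have hB : ∑ i ∈ (Finset.range (t + 1)).filter (fun i => ¬ i ≤ c₀),
        gfun α ((c + e * i).natAbs) ≤ ∑ k ∈ Finset.range (N + 1), gfun α k := by
      apply sum_inj_le (φ := fun i => i - c₀)
      · intro i hi j hj hij
        simp only [Finset.mem_filter, Finset.mem_range] at hi hj
        omega
      · intro i hi
        simp only [Finset.mem_filter, Finset.mem_range] at hi
        rw [Finset.mem_range]
        omega
      · exact gfun_nonneg α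
      · intro i hi
        simp only [Finset.mem_filter, Finset.mem_range] at hi
        rw [habs i]
        have h1 : ((i : ℤ) - c').natAbs = i - c₀ := by omega
        rw [h1]
    linarith

lemma sum_gfun_le {α : ℝ} (hα : -1 < α) (hα0 : α < 0) (n : ℕ) (hn : 1 ≤ n) :
    ∑ k ∈ Finset.range (n + 1), gfun α k ≤ 1 + ((n : ℝ)) ^ (1 + α) / (1 + α) := by
  have h1α : (0:ℝ) < 1 + α := by linarith
  have hber : ∀ k : ℕ, (((k:ℝ) + 1)) ^ α ≤
      (((k:ℝ) + 1) ^ (1 + α) - ((k:ℝ)) ^ (1 + α)) / (1 + α) := by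
    intro k
    rw [le_div_iff₀ h1α]
    have hK : (1:ℝ) ≤ (k:ℝ) + 1 := by have := Nat.cast_nonneg (α := ℝ) k; linarith
    have hK0 : (0:ℝ) < (k:ℝ) + 1 := by positivity
    have h01 : 1 / ((k:ℝ) + 1) ≤ 1 := by rw [div_le_one hK0]; linarith
    have hs1 : (-1:ℝ) ≤ -1 / ((k:ℝ) + 1) := by rw [neg_div]; linarith
    have hb := rpow_one_add_le_one_add_mul_self hs1
      (by linarith : (0:ℝ) ≤ 1 + α) (by linarith : (1:ℝ) + α ≤ 1)
    have he1 : (1 : ℝ) + -1 / ((k:ℝ) + 1) = (k:ℝ) / ((k:ℝ) + 1) := by field_simp; ring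
    rw [he1] at hb
    have he2 : ((k:ℝ) / ((k:ℝ) + 1)) ^ (1 + α) = (k:ℝ) ^ (1 + α) / ((k:ℝ) + 1) ^ (1 + α) :=
      Real.div_rpow (Nat.cast_nonneg k) hK0.le (1 + α)
    rw [he2, div_le_iff₀ (Real.rpow_pos_of_pos hK0 _)] at hb
    have he3 : ((k:ℝ) + 1) ^ (1 + α) = ((k:ℝ) + 1) ^ α * ((k:ℝ) + 1) := by
      rw [add_comm 1 α, Real.rpow_add_one hK0.ne']
    have hb' : (1 + (1 + α) * (-1 / ((k:ℝ) + 1))) * (((k:ℝ) + 1) ^ (1 + α))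
        = ((k:ℝ) + 1) ^ (1 + α) - (1 + α) * ((k:ℝ) + 1) ^ α := by
      rw [he3]; field_simp; ring
    linarith [hb, hb']
  have hg : ∀ k : ℕ, gfun α (k + 1) = ((k:ℝ) + 1) ^ α := by
    intro k
    unfold gfun
    have hmx : max (k + 1) 1 = k + 1 := by omega
    rw [hmx]
    push_cast
    ring_nf
  have htel := Finset.sum_range_sub (fun j : ℕ => ((j:ℝ)) ^ (1 + α)) n
  push_cast at htel
  rw [Real.zero_rpow h1α.ne', sub_zero] at htel
  calc ∑ k ∈ Finset.range (n + 1), gfun α k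
      = gfun α 0 + ∑ k ∈ Finset.range n, gfun α (k + 1) := by
        rw [Finset.sum_range_succ' (fun k => gfun α k) n]; ring
    _ ≤ 1 + ∑ k ∈ Finset.range n, (((k:ℝ) + 1) ^ (1 + α) - ((k:ℝ)) ^ (1 + α)) / (1 + α) := by
        apply add_le_add
        · exact gfun_le_one hα0.le 0
        · apply Finset.sum_le_sum
          intro k _
          rw [hg k]
          exact hber k
    _ = 1 + ((n : ℝ)) ^ (1 + α) / (1 + α) := by
        rw [← Finset.sum_div, htel]

end SumEstimates
section MainBounds

/-- upper constant -/
noncomputable def Kup (d : ℕ) (α : ℝ) : ℝ :=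
  3 * d * (3:ℝ) ^ α + 3 * d * (2:ℝ) ^ (-α) + (1 + 4 * d + 2 * d / (1 + α)) * (3:ℝ) ^ (-α)

/-- lower constant -/
noncomputable def Klow (α : ℝ) : ℝ := min ((4:ℝ) ^ (-α) / 4) ((3:ℝ) ^ α)

lemma Klow_pos (α : ℝ) : 0 < Klow α := by
  apply lt_min
  · have := Real.rpow_pos_of_pos (by norm_num : (0:ℝ) < 4) (-α); linarith
  · exact Real.rpow_pos_of_pos (by norm_num) α

lemma linf_le_linf_add {d : ℕ} (u w : Fin d → ℤ) : linf u ≤ linf w + linf (u - w) := by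
  have h1 : u = w + (u - w) := by ring_nf
  calc linf u = linf (w + (u - w)) := by rw [← h1]
    _ ≤ linf w + linf (u - w) := linf_add_le _ _

lemma nubase_le {d : ℕ} (v : Fin d → ℤ) :
    ((max (linf v) 1 : ℕ) : ℝ) ≤ ((linf v : ℕ) : ℝ) + 1 := by
  have h : max (linf v) 1 ≤ linf v + 1 := by omega
  exact_mod_cast h

lemma le_nubase {d : ℕ} (v : Fin d → ℤ) :
    ((linf v : ℕ) : ℝ) ≤ ((max (linf v) 1 : ℕ) : ℝ) := by
  exact_mod_cast le_max_left _ _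

set_option maxHeartbeats 2000000 in
lemma path_sum_upper {d : ℕ} (hd : 1 ≤ d) {α : ℝ} (hα : -1 < α) (x y : Fin d → ℤ)
    (hxy : y ≠ x) :
    ∃ (m : ℕ) (z : ℕ → Fin d → ℤ), IsPath z m ∧ z 0 = x ∧ z m = y ∧
      ∑ i ∈ Finset.range (m + 1), nu α (z i) ≤
        Kup d α * rhox α x ((linf (y - x) : ℕ) : ℝ) := by
  obtain ⟨m, z, hP, h0, hm, hs⟩ := multi_path α x y
  refine ⟨m, z, hP, h0, hm, le_trans hs ?_⟩
  have hn : 1 ≤ linf (y - x) := linf_pos_of_ne hxy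
  have hN1 : (1:ℝ) ≤ ((linf (y - x) : ℕ) : ℝ) := by exact_mod_cast hn
  set n : ℕ := linf (y - x) with hn'
  set N : ℝ := (n : ℝ) with hN'
  have hN0 : (0:ℝ) < N := by linarith
  set A : ℝ := ((linf x : ℕ) : ℝ) with hA'
  have hA0 : (0:ℝ) ≤ A := Nat.cast_nonneg _
  set M : ℝ := max A N with hM'
  have hM1 : (1:ℝ) ≤ M := le_trans hN1 (le_max_right _ _)
  have hM0 : (0:ℝ) < M := by linarith
  have hAM : A ≤ M := le_max_left _ _
  have hNM : N ≤ M := le_max_right _ _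
  have hrhox : rhox α x N = M ^ α * N := by unfold rhox; rw [hM', hA']
  rw [hrhox]
  have hMα0 : 0 < M ^ α := Real.rpow_pos_of_pos hM0 α
  have hd1 : (1:ℝ) ≤ (d:ℝ) := by exact_mod_cast hd
  have h1α : (0:ℝ) < 1 + α := by linarith
  have ht1 : 0 < 3 * (d:ℝ) * (3:ℝ) ^ α := by
    have := Real.rpow_pos_of_pos (by norm_num : (0:ℝ) < 3) α; nlinarith
  have ht2 : 0 < 3 * (d:ℝ) * (2:ℝ) ^ (-α) := by
    have := Real.rpow_pos_of_pos (by norm_num : (0:ℝ) < 2) (-α); nlinarith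
  have ht3 : 0 < (1 + 4 * (d:ℝ) + 2 * d / (1 + α)) * (3:ℝ) ^ (-α) := by
    have h3 := Real.rpow_pos_of_pos (by norm_num : (0:ℝ) < 3) (-α)
    have hq : 0 < 2 * (d:ℝ) / (1 + α) := div_pos (by linarith) h1α
    nlinarith
  have htj : ∀ j : Fin d, (y j - x j).natAbs ≤ n := fun j => natAbs_le_linf (y - x) j
  have main_bound : ∀ B : ℝ, 0 ≤ B → nu α x ≤ B →
      (∀ (j : Fin d) (i : ℕ), i ≤ (y j - x j).natAbs → nu α (Q x y j i) ≤ B) →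
      nu α x + ∑ j : Fin d, ∑ i ∈ Finset.range ((y j - x j).natAbs + 1), nu α (Q x y j i)
        ≤ 3 * d * N * B := by
    intro B hB0 hxB hQB
    have hinner : ∀ j : Fin d,
        ∑ i ∈ Finset.range ((y j - x j).natAbs + 1), nu α (Q x y j i) ≤ (N + 1) * B := by
      intro j
      calc ∑ i ∈ Finset.range ((y j - x j).natAbs + 1), nu α (Q x y j i)
          ≤ ∑ _i ∈ Finset.range ((y j - x j).natAbs + 1), B := by
            apply Finset.sum_le_sum
            intro i hi
            rw [Finset.mem_range] at hi
            exact hQB j i (by omega)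
        _ = (((y j - x j).natAbs : ℝ) + 1) * B := by
            rw [Finset.sum_const, Finset.card_range]; push_cast; ring
        _ ≤ (N + 1) * B := by
            apply mul_le_mul_of_nonneg_right _ hB0
            have hc : ((y j - x j).natAbs : ℝ) ≤ N := by
              rw [hN']; exact_mod_cast htj j
            linarith
    have houter : ∑ j : Fin d, ∑ i ∈ Finset.range ((y j - x j).natAbs + 1), nu α (Q x y j i)
        ≤ (d:ℝ) * ((N + 1) * B) := by
      calc ∑ j : Fin d, ∑ i ∈ Finset.range ((y j - x j).natAbs + 1), nu α (Q x y j i)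
          ≤ ∑ _j : Fin d, (N + 1) * B := Finset.sum_le_sum fun j _ => hinner j
        _ = (d:ℝ) * ((N + 1) * B) := by
            rw [Finset.sum_const, Finset.card_univ, Fintype.card_fin]; push_cast; ring
    have hdN : (1:ℝ) ≤ (d:ℝ) * N := by nlinarith
    have hdN2 : (d:ℝ) ≤ (d:ℝ) * N := by nlinarith
    have e1 : 1 * B ≤ ((d:ℝ) * N) * B := mul_le_mul_of_nonneg_right hdN hB0
    have e2 : (d:ℝ) * B ≤ ((d:ℝ) * N) * B := mul_le_mul_of_nonneg_right hdN2 hB0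
    linarith [houter, hxB]
  rcases le_or_gt 0 α with hα0 | hα0
  · -- α ≥ 0
    set B : ℝ := (3 * M) ^ α with hB'
    have hB0 : 0 ≤ B := Real.rpow_nonneg (by linarith) α
    have hbase : ∀ v : Fin d → ℤ, ((linf v : ℕ) : ℝ) ≤ A + N →
        nu α v ≤ B := by
      intro v hv
      unfold nu
      apply Real.rpow_le_rpow (Nat.cast_nonneg _) _ hα0
      calc ((max (linf v) 1 : ℕ) : ℝ) ≤ ((linf v : ℕ) : ℝ) + 1 := nubase_le v
        _ ≤ A + N + 1 := by linarith
        _ ≤ 3 * M := by linarith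
    have hxB : nu α x ≤ B := hbase x (by linarith)
    have hQB : ∀ (j : Fin d) (i : ℕ), i ≤ (y j - x j).natAbs → nu α (Q x y j i) ≤ B := by
      intro j i hi
      apply hbase
      have h1 : linf (Q x y j i) ≤ linf x + linf (Q x y j i - x) :=
        linf_le_linf_add _ _
      have h2 : linf (Q x y j i - x) ≤ n := box_Q x y j i hi
      have h3 : linf (Q x y j i) ≤ linf x + n := by omega
      calc ((linf (Q x y j i) : ℕ) : ℝ) ≤ ((linf x + n : ℕ) : ℝ) := by exact_mod_cast h3
        _ = A + N := by push_cast; rw [hA', hN']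
    have hBsplit : B = (3:ℝ) ^ α * M ^ α := Real.mul_rpow (by norm_num) hM0.le
    calc nu α x + ∑ j : Fin d, ∑ i ∈ Finset.range ((y j - x j).natAbs + 1), nu α (Q x y j i)
        ≤ 3 * d * N * B := main_bound B hB0 hxB hQB
      _ = (3 * d * (3:ℝ) ^ α) * (M ^ α * N) := by rw [hBsplit]; ring
      _ ≤ Kup d α * (M ^ α * N) := by
          apply mul_le_mul_of_nonneg_right _ (by positivity)
          unfold Kup; linarith
  · rcases le_or_gt (2 * n) (linf x) with hcase | hcase
    · -- α < 0, far regime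
      have hA2N : 2 * N ≤ A := by rw [hN', hA']; exact_mod_cast hcase
      have hMA : M = A := max_eq_left (by linarith)
      have hA20 : 0 < A / 2 := by linarith
      set B : ℝ := (A / 2) ^ α with hB'
      have hB0 : 0 ≤ B := Real.rpow_nonneg (by linarith) α
      have hbase : ∀ v : Fin d → ℤ, A - N ≤ ((linf v : ℕ) : ℝ) → nu α v ≤ B := by
        intro v hv
        unfold nu
        apply Real.rpow_le_rpow_of_nonpos hA20 _ hα0.le
        calc A / 2 ≤ A - N := by linarith
          _ ≤ ((linf v : ℕ) : ℝ) := hv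
          _ ≤ ((max (linf v) 1 : ℕ) : ℝ) := le_nubase v
      have hxB : nu α x ≤ B := hbase x (by linarith)
      have hQB : ∀ (j : Fin d) (i : ℕ), i ≤ (y j - x j).natAbs → nu α (Q x y j i) ≤ B := by
        intro j i hi
        apply hbase
        have h1 : linf x ≤ linf (Q x y j i) + linf (x - Q x y j i) := linf_le_linf_add _ _
        have h2 : linf (x - Q x y j i) ≤ n := by
          rw [linf_sub_comm]; exact box_Q x y j i hi
        have h3 : linf x ≤ linf (Q x y j i) + n := by omega
        have h4 : A ≤ ((linf (Q x y j i) : ℕ) : ℝ) + N := by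
          rw [hA', hN']; exact_mod_cast h3
        linarith
      have hBsplit : B = (2:ℝ) ^ (-α) * A ^ α := by
        rw [hB', Real.rpow_neg (by norm_num : (0:ℝ) ≤ 2)]
        rw [show A / 2 = A * 2⁻¹ by ring, Real.mul_rpow hA0 (by norm_num), Real.inv_rpow (by norm_num)]
        ring
      calc nu α x + ∑ j : Fin d, ∑ i ∈ Finset.range ((y j - x j).natAbs + 1), nu α (Q x y j i)
          ≤ 3 * d * N * B := main_bound B hB0 hxB hQB
        _ = (3 * d * (2:ℝ) ^ (-α)) * (M ^ α * N) := by rw [hBsplit, hMA]; ring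
        _ ≤ Kup d α * (M ^ α * N) := by
            apply mul_le_mul_of_nonneg_right _ (by positivity)
            unfold Kup; linarith
    · -- α < 0, near regime
      have hA2N : A < 2 * N := by rw [hN', hA']; exact_mod_cast hcase
      have h3N : M ≤ 3 * N := max_le (by linarith) (by linarith)
      set G : ℝ := ∑ k ∈ Finset.range (n + 1), gfun α k with hG'
      have hG0 : 0 ≤ G := Finset.sum_nonneg fun k _ => gfun_nonneg α k
      have hseg : ∀ j : Fin d,
          ∑ i ∈ Finset.range ((y j - x j).natAbs + 1), nu α (Q x y j i) ≤ 2 * G := by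
        intro j
        have hQj : ∀ i : ℕ, (Q x y j i) j = x j + sg (y j - x j) * i := by
          intro i
          unfold Q
          rw [Function.update_self]
        calc ∑ i ∈ Finset.range ((y j - x j).natAbs + 1), nu α (Q x y j i)
            ≤ ∑ i ∈ Finset.range ((y j - x j).natAbs + 1),
                gfun α ((x j + sg (y j - x j) * i).natAbs) := by
              apply Finset.sum_le_sum
              intro i _
              rw [nu_eq_gfun]
              have h1 : ((Q x y j i) j).natAbs ≤ linf (Q x y j i) :=
                natAbs_le_linf _ j
              rw [hQj i] at h1
              exact gfun_antitone hα0.le h1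
          _ ≤ 2 * G := intervalSum hα0.le (x j) (sg (y j - x j)) (sg_eq _)
                ((y j - x j).natAbs) n (htj j)
      have hxB : nu α x ≤ 1 := Real.rpow_le_one_of_one_le_of_nonpos (one_le_nubase α x) hα0.le
      have htot : nu α x + ∑ j : Fin d, ∑ i ∈ Finset.range ((y j - x j).natAbs + 1),
          nu α (Q x y j i) ≤ 1 + (d:ℝ) * (2 * G) := by
        apply add_le_add hxB
        calc ∑ j : Fin d, ∑ i ∈ Finset.range ((y j - x j).natAbs + 1), nu α (Q x y j i)
            ≤ ∑ _j : Fin d, 2 * G := Finset.sum_le_sum fun j _ => hseg j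
          _ = (d:ℝ) * (2 * G) := by
              rw [Finset.sum_const, Finset.card_univ, Fintype.card_fin]; push_cast; ring
      have hGle : G ≤ 1 + N ^ (1 + α) / (1 + α) := by
        rw [hN']; exact sum_gfun_le hα hα0 n (by rw [hn']; exact hn)
      set P : ℝ := N ^ (1 + α) with hP'
      have hP0 : 0 < P := Real.rpow_pos_of_pos hN0 _
      have hP1 : 1 ≤ P := by
        rw [hP']
        calc (1:ℝ) = 1 ^ (1 + α) := (Real.one_rpow _).symm
          _ ≤ N ^ (1 + α) := Real.rpow_le_rpow (by norm_num) hN1 h1α.le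
      have hdP : (d:ℝ) ≤ (d:ℝ) * P := by nlinarith
      have hC0 : 0 ≤ 2 * (d:ℝ) / (1 + α) := by positivity
      have hstep : 1 + (d:ℝ) * (2 * G) ≤ (1 + 4 * (d:ℝ) + 2 * d / (1 + α)) * P := by
        have hG2 : (d:ℝ) * (2 * G) ≤ (d:ℝ) * (2 * (1 + P / (1 + α))) := by
          apply mul_le_mul_of_nonneg_left _ (by linarith)
          linarith
        have hexp : (1 + 4 * (d:ℝ) + 2 * d / (1 + α)) * P
            = P + 4 * d * P + (2 * d / (1 + α)) * P := by ring
        have hfrac : (d:ℝ) * (2 * (1 + P / (1 + α))) = 2 * d + (2 * d / (1 + α)) * P := by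
          field_simp
        have h2d : 2 * (d:ℝ) ≤ 4 * d * P := by nlinarith
        linarith
      have hNα : N ^ α ≤ (3:ℝ) ^ (-α) * M ^ α := by
        have h1 : (3:ℝ) ^ α * N ^ α ≤ M ^ α := by
          rw [← Real.mul_rpow (by norm_num) hN0.le]
          exact Real.rpow_le_rpow_of_nonpos hM0 h3N hα0.le
        have h3inv : (0:ℝ) < (3:ℝ) ^ (-α) := Real.rpow_pos_of_pos (by norm_num) _
        have h2 := mul_le_mul_of_nonneg_left h1 h3inv.le
        calc N ^ α = (3:ℝ) ^ (-α) * ((3:ℝ) ^ α * N ^ α) := by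
              rw [← mul_assoc, ← Real.rpow_add (by norm_num : (0:ℝ) < 3)]
              norm_num
          _ ≤ (3:ℝ) ^ (-α) * M ^ α := h2
      have hPM : P ≤ (3:ℝ) ^ (-α) * M ^ α * N := by
        have hPe : P = N ^ α * N := by
          rw [hP', show (1:ℝ) + α = α + 1 by ring, Real.rpow_add_one hN0.ne']
        rw [hPe]
        exact mul_le_mul_of_nonneg_right hNα hN0.le
      have hC1 : 0 < 1 + 4 * (d:ℝ) + 2 * d / (1 + α) := by
        have := div_pos (by linarith : (0:ℝ) < 2 * d) h1α
        linarith
      calc nu α x + ∑ j : Fin d, ∑ i ∈ Finset.range ((y j - x j).natAbs + 1), nu α (Q x y j i)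
          ≤ 1 + (d:ℝ) * (2 * G) := htot
        _ ≤ (1 + 4 * (d:ℝ) + 2 * d / (1 + α)) * P := hstep
        _ ≤ (1 + 4 * (d:ℝ) + 2 * d / (1 + α)) * ((3:ℝ) ^ (-α) * M ^ α * N) :=
            mul_le_mul_of_nonneg_left hPM hC1.le
        _ = ((1 + 4 * (d:ℝ) + 2 * d / (1 + α)) * (3:ℝ) ^ (-α)) * (M ^ α * N) := by ring
        _ ≤ Kup d α * (M ^ α * N) := by
            apply mul_le_mul_of_nonneg_right _ (by positivity)
            unfold Kup; linarith

lemma Kup_pos {d : ℕ} (hd : 1 ≤ d) {α : ℝ} (hα : -1 < α) : 0 < Kup d α := by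
  have hd1 : (1:ℝ) ≤ (d:ℝ) := by exact_mod_cast hd
  have h1α : (0:ℝ) < 1 + α := by linarith
  have ht1 : 0 < 3 * (d:ℝ) * (3:ℝ) ^ α := by
    have := Real.rpow_pos_of_pos (by norm_num : (0:ℝ) < 3) α; nlinarith
  have ht2 : 0 < 3 * (d:ℝ) * (2:ℝ) ^ (-α) := by
    have := Real.rpow_pos_of_pos (by norm_num : (0:ℝ) < 2) (-α); nlinarith
  have ht3 : 0 < (1 + 4 * (d:ℝ) + 2 * d / (1 + α)) * (3:ℝ) ^ (-α) := by
    have h3 := Real.rpow_pos_of_pos (by norm_num : (0:ℝ) < 3) (-α)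
    have hq : 0 < 2 * (d:ℝ) / (1 + α) := div_pos (by linarith) h1α
    nlinarith
  unfold Kup; linarith

end MainBounds
section LowerBounds

set_option maxHeartbeats 2000000 in
lemma lower_start {d : ℕ} {α : ℝ} (hα0 : 0 ≤ α) {x y : Fin d → ℤ} (hxy : y ≠ x)
    (hyx : linf y ≤ linf x) {z : ℕ → Fin d → ℤ} {m : ℕ}
    (hP : IsPath z m) (h0 : z 0 = x) (hm : z m = y) :
    ((4:ℝ) ^ (-α) / 4) * ((max ((linf x : ℕ) : ℝ) ((linf (y - x) : ℕ) : ℝ)) ^ α *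
      ((linf (y - x) : ℕ) : ℝ)) ≤ ∑ i ∈ Finset.range (m + 1), nu α (z i) := by
  have hn : 1 ≤ linf (y - x) := linf_pos_of_ne hxy
  have hN1 : (1:ℝ) ≤ ((linf (y - x) : ℕ) : ℝ) := by exact_mod_cast hn
  have hnm : linf (y - x) ≤ m := by
    have h := path_m_ge hP
    rw [h0, hm] at h
    exact h
  have h2a : linf (y - x) ≤ 2 * linf x := by
    have h1 : linf (y - x) ≤ linf y + linf x := by
      calc linf (y - x) = linf (y + (-x)) := by rw [sub_eq_add_neg]
        _ ≤ linf y + linf (-x) := linf_add_le _ _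
        _ = linf y + linf x := by rw [linf_neg]
    omega
  set n : ℕ := linf (y - x) with hn'
  set N : ℝ := (n : ℝ) with hN'
  set A : ℝ := ((linf x : ℕ) : ℝ) with hA'
  have hA0 : (0:ℝ) ≤ A := Nat.cast_nonneg _
  set M : ℝ := max A N with hM'
  have hM1 : (1:ℝ) ≤ M := le_trans hN1 (le_max_right _ _)
  have hM0 : (0:ℝ) < M := by linarith
  set K : ℕ := n / 4 with hK'
  have hKn : K ≤ n := Nat.div_le_self n 4
  have h4K : 4 * K ≤ n := by omega
  have h4K1 : n < 4 * (K + 1) := by omega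
  have hA2 : N ≤ 2 * A := by rw [hN', hA']; exact_mod_cast h2a
  have hK4 : 4 * (K:ℝ) ≤ N := by rw [hN']; exact_mod_cast h4K
  have hK41 : N < 4 * ((K:ℝ) + 1) := by rw [hN']; exact_mod_cast h4K1
  have hMq : M / 4 ≤ A - K := by
    rcases le_total A N with h | h
    · have : M = N := max_eq_right h
      rw [this]; linarith
    · have : M = A := max_eq_left h
      rw [this]; linarith
  have hterm : ∀ i ∈ Finset.range (K + 1), (M / 4) ^ α ≤ nu α (z i) := by
    intro i hi
    rw [Finset.mem_range] at hi
    have him : i ≤ m := by omega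
    have hlow := path_linf_lower hP i him
    rw [h0] at hlow
    have hlowR : A ≤ ((linf (z i) : ℕ) : ℝ) + i := by
      rw [hA']; exact_mod_cast hlow
    have hiK : (i : ℝ) ≤ (K : ℝ) := by exact_mod_cast (by omega : i ≤ K)
    have hbase : M / 4 ≤ ((max (linf (z i)) 1 : ℕ) : ℝ) := by
      have := le_nubase (z i)
      linarith
    exact Real.rpow_le_rpow (by linarith) hbase hα0
  have hsum1 : ∑ i ∈ Finset.range (K + 1), (M / 4) ^ α ≤
      ∑ i ∈ Finset.range (K + 1), nu α (z i) := Finset.sum_le_sum hterm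
  have hsum2 : ∑ i ∈ Finset.range (K + 1), nu α (z i) ≤
      ∑ i ∈ Finset.range (m + 1), nu α (z i) := by
    apply Finset.sum_le_sum_of_subset_of_nonneg
    · exact Finset.range_subset_range.mpr (by omega)
    · intro k _ _; exact nu_nonneg α _
  have hsum3 : ∑ i ∈ Finset.range (K + 1), (M / 4) ^ α = ((K:ℝ) + 1) * (M / 4) ^ α := by
    rw [Finset.sum_const, Finset.card_range]; push_cast; ring
  have hq0 : (0:ℝ) ≤ (M / 4) ^ α := Real.rpow_nonneg (by linarith) α
  have hqsplit : (M / 4) ^ α = M ^ α * (4:ℝ) ^ (-α) := by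
    rw [Real.rpow_neg (by norm_num : (0:ℝ) ≤ 4)]
    rw [show M / 4 = M * 4⁻¹ by ring, Real.mul_rpow (by linarith) (by norm_num),
      Real.inv_rpow (by norm_num)]
  have hNK : N / 4 * (M / 4) ^ α ≤ ((K:ℝ) + 1) * (M / 4) ^ α := by
    apply mul_le_mul_of_nonneg_right _ hq0
    linarith
  calc ((4:ℝ) ^ (-α) / 4) * (M ^ α * N) = N / 4 * (M / 4) ^ α := by rw [hqsplit]; ring
    _ ≤ ((K:ℝ) + 1) * (M / 4) ^ α := hNK
    _ = ∑ i ∈ Finset.range (K + 1), (M / 4) ^ α := hsum3.symm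
    _ ≤ ∑ i ∈ Finset.range (K + 1), nu α (z i) := hsum1
    _ ≤ ∑ i ∈ Finset.range (m + 1), nu α (z i) := hsum2

set_option maxHeartbeats 2000000 in
lemma path_sum_lower {d : ℕ} {α : ℝ} (hα : -1 < α) {x y : Fin d → ℤ} (hxy : y ≠ x)
    {z : ℕ → Fin d → ℤ} {m : ℕ} (hP : IsPath z m) (h0 : z 0 = x) (hm : z m = y) :
    Klow α * rhox α x ((linf (y - x) : ℕ) : ℝ) ≤
      ∑ i ∈ Finset.range (m + 1), nu α (z i) := by
  have hn : 1 ≤ linf (y - x) := linf_pos_of_ne hxy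
  have hN1 : (1:ℝ) ≤ ((linf (y - x) : ℕ) : ℝ) := by exact_mod_cast hn
  have hnm : linf (y - x) ≤ m := by
    have h := path_m_ge hP
    rw [h0, hm] at h
    exact h
  set n : ℕ := linf (y - x) with hn'
  set N : ℝ := (n : ℝ) with hN'
  set A : ℝ := ((linf x : ℕ) : ℝ) with hA'
  have hA0 : (0:ℝ) ≤ A := Nat.cast_nonneg _
  set M : ℝ := max A N with hM'
  have hM1 : (1:ℝ) ≤ M := le_trans hN1 (le_max_right _ _)
  have hM0 : (0:ℝ) < M := by linarith
  have hAM : A ≤ M := le_max_left _ _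
  have hNM : N ≤ M := le_max_right _ _
  have hrhox : rhox α x N = M ^ α * N := by unfold rhox; rw [hM', hA']
  rw [hrhox]
  have hMα0 : (0:ℝ) < M ^ α := Real.rpow_pos_of_pos hM0 α
  have hKlow : 0 < Klow α := Klow_pos α
  rcases le_or_gt 0 α with hα0 | hα0
  · -- α ≥ 0 : use start or reversed path
    have hmain : ((4:ℝ) ^ (-α) / 4) * (M ^ α * N) ≤
        ∑ i ∈ Finset.range (m + 1), nu α (z i) := by
      rcases le_total (linf y) (linf x) with hyx | hyx
      · exact lower_start hα0 hxy hyx hP h0 hm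
      · -- reversed path
        have hxy' : x ≠ y := fun h => hxy h.symm
        have hP' : IsPath (fun i => z (m - i)) m := path_reverse hP
        have h0' : (fun i => z (m - i)) 0 = y := by simp [hm]
        have hm' : (fun i => z (m - i)) m = x := by simp [h0]
        have hlow := lower_start hα0 hxy' hyx hP' h0' hm'
        have hrefl := Finset.sum_range_reflect (fun i => nu α (z i)) (m + 1)
        simp only [Nat.add_sub_cancel] at hrefl
        rw [hrefl] at hlow
        have hNN : linf (x - y) = n := by rw [hn']; exact linf_sub_comm x y
        rw [hNN] at hlow
        have hM'le : M ≤ max ((linf y : ℕ) : ℝ) N := by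
          apply max_le _ (le_max_right _ _)
          calc A ≤ ((linf y : ℕ) : ℝ) := by rw [hA']; exact_mod_cast hyx
            _ ≤ max ((linf y : ℕ) : ℝ) N := le_max_left _ _
        have hMM : M ^ α ≤ (max ((linf y : ℕ) : ℝ) N) ^ α :=
          Real.rpow_le_rpow (by linarith) hM'le hα0
        have hcoef : (0:ℝ) ≤ (4:ℝ) ^ (-α) / 4 := by positivity
        have hN0 : (0:ℝ) ≤ N := by linarith
        calc ((4:ℝ) ^ (-α) / 4) * (M ^ α * N)
            ≤ ((4:ℝ) ^ (-α) / 4) * ((max ((linf y : ℕ) : ℝ) N) ^ α * N) := by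
              apply mul_le_mul_of_nonneg_left _ hcoef
              exact mul_le_mul_of_nonneg_right hMM hN0
          _ ≤ ∑ i ∈ Finset.range (m + 1), nu α (z i) := hlow
    have hKl : Klow α ≤ (4:ℝ) ^ (-α) / 4 := min_le_left _ _
    calc Klow α * (M ^ α * N) ≤ ((4:ℝ) ^ (-α) / 4) * (M ^ α * N) :=
          mul_le_mul_of_nonneg_right hKl (by positivity)
      _ ≤ ∑ i ∈ Finset.range (m + 1), nu α (z i) := hmain
  · -- α < 0
    have h3M : (0:ℝ) < 3 * M := by linarith
    have hterm : ∀ i ∈ Finset.range (n + 1), (3 * M) ^ α ≤ nu α (z i) := by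
      intro i hi
      rw [Finset.mem_range] at hi
      have him : i ≤ m := by omega
      have hup := path_linf_upper hP i him
      rw [h0] at hup
      have hupR : ((linf (z i) : ℕ) : ℝ) ≤ A + i := by
        rw [hA']; exact_mod_cast hup
      have hiN : (i : ℝ) ≤ N := by rw [hN']; exact_mod_cast (by omega : i ≤ n)
      have hbase : ((max (linf (z i)) 1 : ℕ) : ℝ) ≤ 3 * M := by
        have h1 := nubase_le (z i)
        linarith
      exact Real.rpow_le_rpow_of_nonpos (by
        exact lt_of_lt_of_le one_pos (one_le_nubase α (z i))) hbase hα0.le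
    have hsum1 : ∑ i ∈ Finset.range (n + 1), (3 * M) ^ α ≤
        ∑ i ∈ Finset.range (n + 1), nu α (z i) := Finset.sum_le_sum hterm
    have hsum2 : ∑ i ∈ Finset.range (n + 1), nu α (z i) ≤
        ∑ i ∈ Finset.range (m + 1), nu α (z i) := by
      apply Finset.sum_le_sum_of_subset_of_nonneg
      · exact Finset.range_subset_range.mpr (by omega)
      · intro k _ _; exact nu_nonneg α _
    have hsum3 : ∑ i ∈ Finset.range (n + 1), (3 * M) ^ α = ((n:ℝ) + 1) * (3 * M) ^ α := by
      rw [Finset.sum_const, Finset.card_range]; push_cast; ring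
    have hsplit : (3 * M) ^ α = (3:ℝ) ^ α * M ^ α := Real.mul_rpow (by norm_num) hM0.le
    have hq0 : (0:ℝ) ≤ (3 * M) ^ α := Real.rpow_nonneg h3M.le α
    have hKl : Klow α ≤ (3:ℝ) ^ α := min_le_right _ _
    calc Klow α * (M ^ α * N) ≤ (3:ℝ) ^ α * (M ^ α * N) :=
          mul_le_mul_of_nonneg_right hKl (by positivity)
      _ = N * (3 * M) ^ α := by rw [hsplit]; ring
      _ ≤ ((n:ℝ) + 1) * (3 * M) ^ α := by
          apply mul_le_mul_of_nonneg_right _ hq0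
          rw [hN']; linarith [hN1]
      _ = ∑ i ∈ Finset.range (n + 1), (3 * M) ^ α := hsum3.symm
      _ ≤ ∑ i ∈ Finset.range (n + 1), nu α (z i) := hsum1
      _ ≤ ∑ i ∈ Finset.range (m + 1), nu α (z i) := hsum2

end LowerBounds
set_option maxHeartbeats 1000000 in
/-- There are constants `c₁, c₂ > 0`, depending only on `α` and `d`,
such that for every `x ∈ ℤ^d` and `r > 0`,
`B(x, ρ_x⁻¹(c₁ r)) ⊆ B_ρ(x, r) ⊆ B(x, ρ_x⁻¹(c₂ r))`. -/
theorem rho_ball_comparison (d : ℕ) (hd : 1 ≤ d) (α : ℝ) (hα : -1 < α) :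
    ∃ c₁ c₂ : ℝ, 0 < c₁ ∧ 0 < c₂ ∧
      ∀ (x : Fin d → ℤ) (r : ℝ), 0 < r →
        {y : Fin d → ℤ | ((linf (y - x) : ℕ) : ℝ) ≤ rhoxInv α x (c₁ * r)} ⊆
            {y : Fin d → ℤ | rho α x y ≤ r} ∧
          {y : Fin d → ℤ | rho α x y ≤ r} ⊆
            {y : Fin d → ℤ | ((linf (y - x) : ℕ) : ℝ) ≤ rhoxInv α x (c₂ * r)} := by
  have hKup := Kup_pos hd hα
  have hKlow := Klow_pos α
  refine ⟨1 / Kup d α, 1 / Klow α, by positivity, by positivity, ?_⟩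
  intro x r hr
  constructor
  · -- first inclusion
    intro y hy
    simp only [Set.mem_setOf_eq] at hy ⊢
    by_cases hxy : y = x
    · rw [hxy]
      simp only [rho, if_pos rfl]
      exact hr.le
    · have hn : 1 ≤ linf (y - x) := linf_pos_of_ne hxy
      have hN0 : (0:ℝ) < ((linf (y - x) : ℕ) : ℝ) := by exact_mod_cast hn
      obtain ⟨m, z, hP, h0, hm, hs⟩ := path_sum_upper hd hα x y hxy
      have hxney : x ≠ y := fun h => hxy h.symm
      have hrho_le : rho α x y ≤ ∑ i ∈ Finset.range (m + 1), nu α (z i) := by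
        rw [rho, if_neg hxney]
        apply csInf_le
        · refine ⟨0, ?_⟩
          rintro S ⟨m', z', hP', h0', hm', rfl⟩
          exact Finset.sum_nonneg fun i _ => nu_nonneg α _
        · exact ⟨m, z, hP, h0, hm, rfl⟩
      have hc1r : 0 < 1 / Kup d α * r := by positivity
      have hmono : rhox α x ((linf (y - x) : ℕ) : ℝ) ≤
          rhox α x (rhoxInv α x (1 / Kup d α * r)) := rhox_mono hα x hN0 hy
      rw [rhox_rhoxInv hα x hc1r] at hmono
      calc rho α x y ≤ ∑ i ∈ Finset.range (m + 1), nu α (z i) := hrho_le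
        _ ≤ Kup d α * rhox α x ((linf (y - x) : ℕ) : ℝ) := hs
        _ ≤ Kup d α * (1 / Kup d α * r) := mul_le_mul_of_nonneg_left hmono hKup.le
        _ = r := by field_simp
  · -- second inclusion
    intro y hy
    simp only [Set.mem_setOf_eq] at hy ⊢
    have hc2r : 0 < 1 / Klow α * r := by positivity
    by_cases hxy : y = x
    · rw [hxy, sub_self]
      have h0 : linf (0 : Fin d → ℤ) = 0 := by simp [linf]
      rw [h0]
      exact_mod_cast (rhoxInv_pos hα x hc2r).le
    · have hn : 1 ≤ linf (y - x) := linf_pos_of_ne hxy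
      have hN0 : (0:ℝ) < ((linf (y - x) : ℕ) : ℝ) := by exact_mod_cast hn
      have hxney : x ≠ y := fun h => hxy h.symm
      obtain ⟨m, z, hP, h0, hm, _⟩ := path_sum_upper hd hα x y hxy
      have hge : Klow α * rhox α x ((linf (y - x) : ℕ) : ℝ) ≤ rho α x y := by
        rw [rho, if_neg hxney]
        apply le_csInf
        · exact ⟨_, m, z, hP, h0, hm, rfl⟩
        · rintro S ⟨m', z', hP', h0', hm', rfl⟩
          exact path_sum_lower hα hxy hP' h0' hm'
      have h1 : rhox α x ((linf (y - x) : ℕ) : ℝ) ≤ 1 / Klow α * r := by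
        rw [show 1 / Klow α * r = r / Klow α by ring, le_div_iff₀ hKlow]
        calc rhox α x ((linf (y - x) : ℕ) : ℝ) * Klow α
            = Klow α * rhox α x ((linf (y - x) : ℕ) : ℝ) := by ring
          _ ≤ rho α x y := hge
          _ ≤ r := hy
      have h2 : rhox α x ((linf (y - x) : ℕ) : ℝ) ≤
          rhox α x (rhoxInv α x (1 / Klow α * r)) := by
        rw [rhox_rhoxInv hα x hc2r]
        exact h1
      exact le_of_rhox_le hα x (rhoxInv_pos hα x hc2r) h2
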